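/- With M_n := (1 − l_n)^{−1} for nonzero integers n, one has sup_{n ∈ ℤ \ {0}} |M_n| < ∞; equivalently, the quantities |1 − l_n| are bounded away from zero uniformly in n. -/

import Mathlib

open Complex Filter

/-- `Θ_i = α_i + i·β_i`. -/
noncomputable def Thi (αi βi : ℝ) : ℂ := (αi : ℂ) + (βi : ℂ) * Complex.I

/-- `Θ_o = α_o + i·β_o`. -/
noncomputable def Tho (αo βo : ℝ) : ℂ := (αo : ℂ) + (βo : ℂ) * Complex.I

/-- The multiplier `l_n` of equation (36A):
`l_n = (1 − R^{2n})·|Θ_i|² / ((sign(n)·α_i − i·β_i)·(Θ_o + R^{2n}·Θ̄_o))`. -/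
noncomputable def lseq (αi αo βi βo R : ℝ) (n : ℤ) : ℂ :=
  (((1 - R ^ (2 * n)) * ‖Thi αi βi‖ ^ 2 : ℝ) : ℂ) /
    (((n.sign : ℂ) * (αi : ℂ) - (βi : ℂ) * Complex.I) *
      (Tho αo βo + ((R ^ (2 * n) : ℝ) : ℂ) * (starRingEnd ℂ) (Tho αo βo)))

set_option maxHeartbeats 1000000 in
/-- With `M_n := (1 − l_n)⁻¹`, the family `(M_n)_{n ≠ 0}` is bounded;
equivalently the quantities `|1 − l_n|` are uniformly bounded away from zero. -/
theorem statement5 (αi αo βi βo R : ℝ)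
    (hαi : 0 < αi) (hαo : 0 < αo) (hβi : 0 ≤ βi) (hβo : 0 ≤ βo) (hR : 2 ≤ R) :
    ∃ C : ℝ, ∀ n : ℤ, n ≠ 0 →
      ‖(1 - lseq αi αo βi βo R n)⁻¹‖ ≤ C := by
  have hR0 : (0:ℝ) < R := by linarith
  have hR1 : (1:ℝ) ≤ R := by linarith
  set Θo : ℂ := Tho αo βo with hΘo
  have hΘore : Θo.re = αo := by simp [hΘo, Tho]
  have hΘoabs : αo ≤ ‖Θo‖ := hΘore ▸ Complex.re_le_norm Θo
  have hΘopos : 0 < ‖Θo‖ := lt_of_lt_of_le hαo hΘoabs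
  refine ⟨‖Θo‖ / αo, fun n hn => ?_⟩
  set t : ℝ := R ^ (2*n) with ht
  have ht0 : 0 < t := zpow_pos hR0 _
  set s : ℝ := (n.sign : ℝ) with hs
  have hs2 : s^2 = 1 := by
    rcases Int.lt_or_lt_of_ne hn with h | h
    · simp [hs, Int.sign_eq_neg_one_of_neg h]
    · simp [hs, Int.sign_eq_one_of_pos h]
  have hsign : s * (1 - t) ≤ 0 := by
    rcases Int.lt_or_lt_of_ne hn with h | h
    · have h1 : t ≤ 1 := zpow_le_one_of_nonpos₀ hR1 (by omega)
      rw [hs, Int.sign_eq_neg_one_of_neg h]; push_cast; nlinarith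
    · have h1 : (1:ℝ) ≤ t := one_le_zpow₀ hR1 (by omega)
      rw [hs, Int.sign_eq_one_of_pos h]; push_cast; nlinarith
  set d : ℂ := (n.sign : ℂ) * (αi : ℂ) - (βi : ℂ) * Complex.I with hd
  set E : ℂ := Θo + ((t:ℝ):ℂ) * (starRingEnd ℂ) Θo with hE
  set r : ℝ := (1 - t) * ‖Thi αi βi‖ ^ 2 with hr
  have hl : lseq αi αo βi βo R n = (r : ℂ) / (d * E) := rfl
  set A : ℝ := ‖Thi αi βi‖ with hA
  have hA2 : A^2 = αi^2 + βi^2 := by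
    rw [hA, Complex.sq_norm, Complex.normSq_apply]; simp [Thi]; ring
  have hApos : 0 < A := by nlinarith [norm_nonneg (Thi αi βi)]
  have hdre : d.re = s * αi := by simp [hd, hs]
  have hdim : d.im = -βi := by simp [hd]
  have hnormSq : Complex.normSq d = αi^2 + βi^2 := by
    rw [Complex.normSq_apply, hdre, hdim]; nlinarith [hs2]
  have hdA : ‖d‖ = A := by
    rw [Complex.norm_def, hnormSq, ← hA2, Real.sqrt_sq hApos.le]
  have hconjd_mul : (starRingEnd ℂ) d * d = ((αi^2 + βi^2 : ℝ) : ℂ) := by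
    rw [mul_comm, Complex.mul_conj, hnormSq]
  have hdcre : ((starRingEnd ℂ) d).re = s * αi := by simp [hdre]
  -- expand conj d * (d*E - r)
  have hexp : (starRingEnd ℂ) d * (d * E - (r:ℂ)) =
      ((αi^2 + βi^2 : ℝ):ℂ) * E - (r:ℂ) * (starRingEnd ℂ) d := by
    rw [mul_sub, ← mul_assoc, hconjd_mul]; ring
  have hEre : E.re = αo * (1 + t) := by
    simp [hE, Complex.add_re, Complex.mul_re, Complex.conj_re, Complex.conj_im,
      Complex.ofReal_re, Complex.ofReal_im, hΘore]; ring
  have hre : ((starRingEnd ℂ) d * (d * E - (r:ℂ))).re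
      = (αi^2 + βi^2) * (αo * (1 + t)) - r * (s * αi) := by
    rw [hexp]
    rw [Complex.sub_re, Complex.re_ofReal_mul, Complex.re_ofReal_mul, hEre, hdcre]
  have hrs : r * (s * αi) ≤ 0 := by
    have : r * (s * αi) = (s * (1 - t)) * (A^2 * αi) := by rw [hr]; ring
    rw [this]
    exact mul_nonpos_of_nonpos_of_nonneg hsign (by positivity)
  have hkey : (αi^2 + βi^2) * (αo * (1 + t)) ≤ ((starRingEnd ℂ) d * (d * E - (r:ℂ))).re := by
    rw [hre]; linarith
  -- lower bound on |d*E - r|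
  have hlow : A * (αo * (1 + t)) ≤ ‖d * E - (r:ℂ)‖ := by
    have h1 := (Complex.re_le_norm _).trans_eq (norm_mul ((starRingEnd ℂ) d) (d * E - (r:ℂ)))
    have h2 : ‖(starRingEnd ℂ) d‖ = A := by rw [Complex.norm_conj, hdA]
    have h3 : (αi^2+βi^2) * (αo*(1+t)) ≤ A * ‖d * E - (r:ℂ)‖ := by
      calc (αi^2+βi^2) * (αo*(1+t)) ≤ ((starRingEnd ℂ) d * (d * E - (r:ℂ))).re := hkey
        _ ≤ ‖(starRingEnd ℂ) d‖ * ‖d * E - (r:ℂ)‖ := h1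
        _ = A * ‖d * E - (r:ℂ)‖ := by rw [h2]
    rw [← hA2] at h3
    nlinarith [hApos, norm_nonneg (d * E - (r:ℂ))]
  -- upper bound on |d*E|
  have hup : ‖d * E‖ ≤ A * ((1 + t) * ‖Θo‖) := by
    rw [norm_mul, hdA]
    refine mul_le_mul_of_nonneg_left ?_ hApos.le
    calc ‖E‖ ≤ ‖Θo‖ + ‖((t:ℝ):ℂ) * (starRingEnd ℂ) Θo‖ :=
          norm_add_le _ _
      _ = ‖Θo‖ + t * ‖Θo‖ := by
          rw [norm_mul, Complex.norm_real, Real.norm_eq_abs, Complex.norm_conj, abs_of_pos ht0]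
      _ = (1 + t) * ‖Θo‖ := by ring
  have ht1 : (0:ℝ) < 1 + t := by linarith
  -- positivity of |d*E - r|
  have hDrpos : 0 < ‖d * E - (r:ℂ)‖ := lt_of_lt_of_le (by positivity) hlow
  by_cases hD : d * E = 0
  · rw [hl, hD, div_zero, sub_zero, inv_one, norm_one]
    rw [le_div_iff₀ hαo]
    linarith
  · have h1l : 1 - lseq αi αo βi βo R n = (d * E - (r:ℂ)) / (d * E) := by
      rw [hl, one_sub_div hD]
    have habs : ‖1 - lseq αi αo βi βo R n‖
        = ‖d * E - (r:ℂ)‖ / ‖d * E‖ := by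
      rw [h1l, norm_div]
    have hDpos : 0 < ‖d * E‖ := norm_pos_iff.mpr hD
    have hlb : αo / ‖Θo‖ ≤ ‖1 - lseq αi αo βi βo R n‖ := by
      rw [habs, div_le_div_iff₀ hΘopos hDpos]
      calc αo * ‖d * E‖ ≤ αo * (A * ((1 + t) * ‖Θo‖)) :=
            mul_le_mul_of_nonneg_left hup hαo.le
        _ = (A * (αo * (1 + t))) * ‖Θo‖ := by ring
        _ ≤ ‖d * E - (r:ℂ)‖ * ‖Θo‖ :=
            mul_le_mul_of_nonneg_right hlow hΘopos.le
    rw [norm_inv]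
    have h0 : 0 < αo / ‖Θo‖ := by positivity
    calc (‖1 - lseq αi αo βi βo R n‖)⁻¹ ≤ (αo / ‖Θo‖)⁻¹ :=
          inv_anti₀ h0 hlb
      _ = ‖Θo‖ / αo := by rw [inv_div]
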